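/- Let a, b ∈ ℂ^M be unit vectors with |a^H b| = cosθ, θ ∈ (0, π/2). Among all w ∈ ℂ^M with ‖w‖² ≤ P and |a^H w|² ≥ g (where 0 < g ≤ P cos²θ is violated, i.e., P cos²θ < g ≤ P), the maximum of |b^H w|² equals (√g cosθ + √(P − g) sinθ)². -/

import Mathlib

open scoped ComplexInnerProductSpace
open Real

lemma key_real (c s' P g x : ℝ) (hc : 0 ≤ c) (hs' : 0 < s') (hcs : c^2 + s'^2 = 1)
    (hg1 : P * c^2 < g) (hg2 : g ≤ P) (hx0 : 0 ≤ x) (hx1 : g ≤ x^2) (hx2 : x^2 ≤ P) :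
    c * x + s' * Real.sqrt (P - x^2) ≤ c * Real.sqrt g + s' * Real.sqrt (P - g) := by
  have hP0 : 0 ≤ P := le_trans (sq_nonneg x) hx2
  have hg0 : 0 < g := lt_of_le_of_lt (mul_nonneg hP0 (sq_nonneg c)) hg1
  set u := Real.sqrt g with hu
  set v := Real.sqrt (P - g) with hv
  set t := Real.sqrt (P - x^2) with ht
  have hu2 : u^2 = g := Real.sq_sqrt hg0.le
  have hv2 : v^2 = P - g := Real.sq_sqrt (by linarith)
  have ht2 : t^2 = P - x^2 := Real.sq_sqrt (by linarith)
  have hu0 : 0 ≤ u := Real.sqrt_nonneg _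
  have hv0 : 0 ≤ v := Real.sqrt_nonneg _
  have ht0 : 0 ≤ t := Real.sqrt_nonneg _
  have hxu : u ≤ x := by
    have := Real.sqrt_le_sqrt hx1
    rwa [Real.sqrt_sq hx0] at this
  have h1 : c * v ≤ s' * u := by
    nlinarith [mul_nonneg hc hv0, mul_nonneg hs'.le hu0]
  have h2 : c * t ≤ s' * x := by
    nlinarith [mul_nonneg hc ht0, mul_nonneg hs'.le hx0]
  rcases (add_nonneg hv0 ht0).eq_or_lt with h | h
  · have hvz : v = 0 := le_antisymm (by linarith) hv0
    have htz : t = 0 := le_antisymm (by linarith) ht0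
    have hxg : x^2 = g := by nlinarith
    have hxeq : x = u := by rw [hu, ← hxg, Real.sqrt_sq hx0]
    rw [hxeq, hvz, htz]
  · have key : (v + t) * (c * x + s' * t) ≤ (v + t) * (c * u + s' * v) := by
      nlinarith [mul_le_mul_of_nonneg_left (add_le_add h1 h2) (sub_nonneg.2 hxu)]
    exact le_of_mul_le_mul_left key h

/-- Optimal value (45) of the non-convex beamforming subproblem in the regime
where the communication constraint is active. -/
theorem stmt_7 {M : ℕ} (a b : EuclideanSpace ℂ (Fin M))
    (ha : ‖a‖ = 1) (hb : ‖b‖ = 1) (θ P g : ℝ)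
    (hθ : θ ∈ Set.Ioo 0 (π / 2)) (hab : ‖⟪a, b⟫‖ = Real.cos θ)
    (hg₁ : P * Real.cos θ ^ 2 < g) (hg₂ : g ≤ P) :
    IsGreatest
      {t : ℝ | ∃ w : EuclideanSpace ℂ (Fin M),
        ‖w‖ ^ 2 ≤ P ∧ ‖⟪a, w⟫‖ ^ 2 ≥ g ∧ t = ‖⟪b, w⟫‖ ^ 2}
      ((Real.sqrt g * Real.cos θ + Real.sqrt (P - g) * Real.sin θ) ^ 2) := by
  obtain ⟨hθ1, hθ2⟩ := hθ
  have hpi := Real.pi_pos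
  have hcos : 0 < Real.cos θ := Real.cos_pos_of_mem_Ioo ⟨by linarith, hθ2⟩
  have hsin : 0 < Real.sin θ := Real.sin_pos_of_pos_of_lt_pi hθ1 (by linarith)
  have hpyth : Real.cos θ ^ 2 + Real.sin θ ^ 2 = 1 := by
    rw [add_comm]; exact Real.sin_sq_add_cos_sq θ
  have hP0 : 0 < P := by nlinarith
  have hg0 : 0 < g := lt_of_le_of_lt (by positivity) hg₁
  set α : ℂ := ⟪a, b⟫ with hα
  have hαabs : ‖α‖ = Real.cos θ := by exact hab
  set c : EuclideanSpace ℂ (Fin M) := b - α • a with hc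
  have haa : ⟪a, a⟫ = 1 := by
    rw [inner_self_eq_norm_sq_to_K, ha]; norm_num
  have hac : ⟪a, c⟫ = 0 := by
    rw [hc, inner_sub_right, inner_smul_right, haa, mul_one, hα, sub_self]
  have hca : ⟪c, a⟫ = 0 := by
    rw [← inner_conj_symm, hac]; simp
  have hnc2 : ‖c‖ ^ 2 = Real.sin θ ^ 2 := by
    have h1 : ⟪b, α • a⟫ = α * (starRingEnd ℂ) α := by
      rw [inner_smul_right, ← inner_conj_symm, hα]
    have h2 : RCLike.re (⟪b, α • a⟫ : ℂ) = Real.cos θ ^ 2 := by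
      rw [h1, Complex.mul_conj]
      have : Complex.normSq α = Real.cos θ ^ 2 := by
        rw [Complex.normSq_eq_norm_sq, ← hab]
      rw [this]; exact RCLike.ofReal_re _
    have h3 : ‖c‖ ^ 2 = ‖b‖ ^ 2 - 2 * RCLike.re (⟪b, α • a⟫ : ℂ) + ‖α • a‖ ^ 2 := by
      rw [hc]; exact norm_sub_sq b (α • a)
    rw [h3, h2, hb, norm_smul, ha, mul_one, hαabs]
    nlinarith
  have hnc : ‖c‖ = Real.sin θ := by
    rw [← Real.sqrt_sq (norm_nonneg c), hnc2, Real.sqrt_sq hsin.le]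
  have hbdec : b = α • a + c := by rw [hc]; abel
  have hbw : ∀ w : EuclideanSpace ℂ (Fin M),
      ⟪b, w⟫ = (starRingEnd ℂ) α * ⟪a, w⟫ + ⟪c, w⟫ := by
    intro w
    conv_lhs => rw [hbdec]
    rw [inner_add_left, inner_smul_left]
  have hcosC : ((Real.cos θ : ℂ)) ≠ 0 := by
    exact_mod_cast hcos.ne'
  have hconj : (starRingEnd ℂ) α * α = ((Real.cos θ ^ 2 : ℝ) : ℂ) := by
    rw [mul_comm, Complex.mul_conj, Complex.normSq_eq_norm_sq, hab]
  constructor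
  · -- membership
    set β : ℂ := (Real.sqrt g : ℂ) * (α / (Real.cos θ : ℂ)) with hβ
    set γ : ℂ := ((Real.sqrt (P - g) / Real.sin θ : ℝ) : ℂ) with hγ
    have haw0 : ⟪a, β • a + γ • c⟫ = β := by
      rw [inner_add_right, inner_smul_right, inner_smul_right, haa, hac]
      ring
    have habsβ : ‖β‖ = Real.sqrt g := by
      rw [hβ, norm_mul, norm_div, Complex.norm_real, Real.norm_eq_abs, Complex.norm_real, Real.norm_eq_abs,
        abs_of_nonneg (Real.sqrt_nonneg g), abs_of_nonneg hcos.le, hab,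
        div_self hcos.ne', mul_one]
    have habsγ : ‖γ‖ = Real.sqrt (P - g) / Real.sin θ := by
      rw [hγ, Complex.norm_real, Real.norm_eq_abs,
        abs_of_nonneg (div_nonneg (Real.sqrt_nonneg _) hsin.le)]
    refine ⟨β • a + γ • c, ?_, ?_, ?_⟩
    · have horth : RCLike.re (⟪β • a, γ • c⟫ : ℂ) = 0 := by
        rw [inner_smul_left, inner_smul_right, hac]
        simp
      have hn : ‖β • a + γ • c‖ ^ 2
          = ‖β • a‖ ^ 2 + 2 * RCLike.re (⟪β • a, γ • c⟫ : ℂ) + ‖γ • c‖ ^ 2 :=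
        norm_add_sq _ _
      rw [hn, horth, norm_smul, norm_smul, ha, hnc]
      have h1 : ‖β‖ = Real.sqrt g := by rw [habsβ]
      have h2 : ‖γ‖ = Real.sqrt (P - g) / Real.sin θ := by
        rw [habsγ]
      rw [h1, h2]
      have e1 : Real.sqrt g ^ 2 = g := Real.sq_sqrt hg0.le
      have e2 : Real.sqrt (P - g) ^ 2 = P - g := Real.sq_sqrt (by linarith)
      field_simp
      nlinarith [e1, e2]
    · rw [haw0, habsβ, Real.sq_sqrt hg0.le]
    · have hcw0 : ⟪c, β • a + γ • c⟫ = γ * ((Real.sin θ ^ 2 : ℝ) : ℂ) := by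
        rw [inner_add_right, inner_smul_right, inner_smul_right, hca,
          inner_self_eq_norm_sq_to_K, hnc, mul_zero, zero_add]
        norm_cast
      have e1 : (starRingEnd ℂ) α * β = ((Real.sqrt g * Real.cos θ : ℝ) : ℂ) := by
        rw [hβ, Complex.ofReal_mul, mul_left_comm, ← mul_div_assoc, hconj,
          Complex.ofReal_pow, sq, mul_div_assoc, div_self hcosC, mul_one]
      have e2 : ⟪b, β • a + γ • c⟫
          = ((Real.sqrt g * Real.cos θ + Real.sqrt (P - g) * Real.sin θ : ℝ) : ℂ) := by
        rw [hbw, haw0, hcw0, e1, hγ, ← Complex.ofReal_mul,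
          ← Complex.ofReal_add, Complex.ofReal_inj]
        field_simp
      rw [e2, Complex.norm_real, Real.norm_eq_abs, abs_of_nonneg (by positivity)]
  · -- upper bound
    rintro t ⟨w, hw1, hw2, rfl⟩
    set x : ℝ := ‖⟪a, w⟫‖ with hx
    have hxnorm : ‖(⟪a, w⟫ : ℂ)‖ = x := by rfl
    have hx0 : 0 ≤ x := norm_nonneg _
    have hxw : x ≤ ‖w‖ := by
      have := norm_inner_le_norm (𝕜 := ℂ) a w
      rwa [ha, one_mul, hxnorm] at this
    have hx2 : x ^ 2 ≤ P := by
      have h := pow_le_pow_left₀ hx0 hxw 2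
      linarith
    have hx1 : g ≤ x ^ 2 := hw2
    set w' : EuclideanSpace ℂ (Fin M) := w - (⟪a, w⟫ : ℂ) • a with hw'
    have hcw' : ⟪c, w⟫ = ⟪c, w'⟫ := by
      rw [hw', inner_sub_right, inner_smul_right, hca, mul_zero, sub_zero]
    have hinner_aw : RCLike.re (⟪w, (⟪a, w⟫ : ℂ) • a⟫ : ℂ) = x ^ 2 := by
      rw [inner_smul_right, ← inner_conj_symm w a, Complex.mul_conj]
      have hsq : Complex.normSq ⟪a, w⟫ = x ^ 2 := by
        rw [Complex.normSq_eq_norm_sq, hx]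
      rw [hsq]
      exact RCLike.ofReal_re _
    have hnw' : ‖w'‖ ^ 2 = ‖w‖ ^ 2 - x ^ 2 := by
      have h3 : ‖w'‖ ^ 2 = ‖w‖ ^ 2 - 2 * RCLike.re (⟪w, (⟪a, w⟫ : ℂ) • a⟫ : ℂ)
          + ‖(⟪a, w⟫ : ℂ) • a‖ ^ 2 := norm_sub_sq w ((⟪a, w⟫ : ℂ) • a)
      rw [h3, hinner_aw, norm_smul, ha, mul_one, hxnorm]
      ring
    have hcwb : ‖(⟪c, w⟫ : ℂ)‖ ≤ Real.sin θ * Real.sqrt (P - x ^ 2) := by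
      rw [hcw']
      calc ‖(⟪c, w'⟫ : ℂ)‖ ≤ ‖c‖ * ‖w'‖ := norm_inner_le_norm _ _
        _ = Real.sin θ * ‖w'‖ := by rw [hnc]
        _ ≤ Real.sin θ * Real.sqrt (P - x ^ 2) := by
            apply mul_le_mul_of_nonneg_left _ hsin.le
            rw [← Real.sqrt_sq (norm_nonneg w'), hnw']
            exact Real.sqrt_le_sqrt (by linarith)
    have htri : ‖(⟪b, w⟫ : ℂ)‖ ≤ Real.cos θ * x + ‖(⟪c, w⟫ : ℂ)‖ := by
      rw [hbw w]
      calc ‖(starRingEnd ℂ) α * ⟪a, w⟫ + ⟪c, w⟫‖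
          ≤ ‖(starRingEnd ℂ) α * ⟪a, w⟫‖ + ‖(⟪c, w⟫ : ℂ)‖ := norm_add_le _ _
        _ = Real.cos θ * x + ‖(⟪c, w⟫ : ℂ)‖ := by
            rw [norm_mul, RCLike.norm_conj, hαabs, hxnorm]
    have hfin : ‖(⟪b, w⟫ : ℂ)‖ ≤ Real.cos θ * Real.sqrt g + Real.sin θ * Real.sqrt (P - g) := by
      calc ‖(⟪b, w⟫ : ℂ)‖ ≤ Real.cos θ * x + ‖(⟪c, w⟫ : ℂ)‖ := htri
        _ ≤ Real.cos θ * x + Real.sin θ * Real.sqrt (P - x ^ 2) := by linarith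
        _ ≤ Real.cos θ * Real.sqrt g + Real.sin θ * Real.sqrt (P - g) :=
            key_real _ _ _ _ _ hcos.le hsin hpyth hg₁ hg₂ hx0 hx1 hx2
    have : ‖⟪b, w⟫‖ ≤ Real.sqrt g * Real.cos θ + Real.sqrt (P - g) * Real.sin θ := by
      linarith [hfin]
    exact pow_le_pow_left₀ (norm_nonneg _) this 2
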